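/- Let X, Y be metric spaces, f: X → X and g: Y → Y maps. Equip X × Y with the maximum metric. Then for all δ > 0 and ν ∈ (0,1]: Sep(f×g, δ, ν) ≥ Sep(f,δ,ν) · Sep(g,δ,ν), where f×g denotes the product map (x,y) ↦ (f x, g y). -/

import Mathlib

open Filter Metric Set

/-- `Sn f δ x y n` counts the times `0 ≤ k < n` with `dist (f^[k] x) (f^[k] y) ≥ δ`. -/
noncomputable def Sn {X : Type*} [PseudoMetricSpace X] (f : X → X) (δ : ℝ) (x y : X)
    (n : ℕ) : ℕ :=
  Set.ncard {k : ℕ | k < n ∧ δ ≤ dist (f^[k] x) (f^[k] y)}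

/-- asymptotic separation frequency `limsup_n S_n(f,δ,x,y)/n`. -/
noncomputable def sepFreq {X : Type*} [PseudoMetricSpace X] (f : X → X) (δ : ℝ) (x y : X) : ℝ :=
  Filter.limsup (fun n : ℕ => (Sn f δ x y n : ℝ) / n) Filter.atTop

/-- A set is `(f,δ,ν)`-separated if all pairs of distinct points are `(f,δ,ν)`-separated. -/
def IsSeparatedSet {X : Type*} [PseudoMetricSpace X] (f : X → X) (δ ν : ℝ) (S : Set X) : Prop :=
  ∀ x ∈ S, ∀ y ∈ S, x ≠ y → ν ≤ sepFreq f δ x y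

/-- A set is `(f,δ,ν)`-spanning if every point has a companion in it with separation
frequency `< ν`. -/
def IsSpanningSet {X : Type*} [PseudoMetricSpace X] (f : X → X) (δ ν : ℝ) (S : Set X) : Prop :=
  ∀ x : X, ∃ y ∈ S, sepFreq f δ x y < ν

/-- `SepNum f δ ν`: supremal cardinality of an `(f,δ,ν)`-separated set. -/
noncomputable def SepNum {X : Type*} [PseudoMetricSpace X] (f : X → X) (δ ν : ℝ) : ℕ∞ :=
  ⨆ (S : Set X) (_ : IsSeparatedSet f δ ν S), S.encard

/-- `SpanNum f δ ν`: minimal cardinality of an `(f,δ,ν)`-spanning set. -/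
noncomputable def SpanNum {X : Type*} [PseudoMetricSpace X] (f : X → X) (δ ν : ℝ) : ℕ∞ :=
  ⨅ (S : Set X) (_ : IsSpanningSet f δ ν S), S.encard

lemma my_encard_prod {X Y : Type*} (S : Set X) (T : Set Y) :
    (S ×ˢ T).encard = S.encard * T.encard := by
  simp only [Set.encard, ENat.card]
  rw [Cardinal.mk_congr (Equiv.Set.prod S T), Cardinal.mk_prod, map_mul,
    Cardinal.toENat_lift, Cardinal.toENat_lift]

lemma my_exists_eq_iSup {ρ : Sort*} (u : ρ → ℕ∞) (hu0 : (⨆ r, u r) ≠ 0)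
    (hut : (⨆ r, u r) ≠ ⊤) : ∃ r, u r = ⨆ r, u r := by
  obtain ⟨a, ha⟩ := WithTop.ne_top_iff_exists.1 hut
  have hapos : 0 < a := Nat.pos_of_ne_zero fun h => hu0 (by simp [← ha, h]; rfl)
  obtain ⟨r, hr⟩ := lt_iSup_iff.1 (show ((a - 1 : ℕ) : ℕ∞) < ⨆ r, u r by
    rw [← ha]; exact ENat.coe_lt_coe.2 (Nat.sub_lt hapos one_pos))
  refine ⟨r, le_antisymm (le_iSup u r) ?_⟩
  have hur : u r ≤ (a : ℕ∞) := (le_iSup u r).trans ha.ge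
  have hut' : u r ≠ ⊤ := fun ht => by simp [ht] at hur
  obtain ⟨m, hm⟩ := WithTop.ne_top_iff_exists.1 hut'
  rw [← ha, ← hm]
  rw [← hm] at hr
  exact ENat.coe_le_coe.2 (Nat.le_of_pred_lt (ENat.coe_lt_coe.1 hr))

lemma my_iSup_mul_iSup_le {ι κ : Sort*} (f : ι → ℕ∞) (g : κ → ℕ∞) {C : ℕ∞}
    (h : ∀ i j, f i * g j ≤ C) : (⨆ i, f i) * (⨆ j, g j) ≤ C := by
  rcases eq_or_ne (⨆ i, f i) 0 with h0 | h0
  · simp [h0]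
  rcases eq_or_ne (⨆ j, g j) 0 with h0' | h0'
  · simp [h0']
  obtain ⟨i0, hi0⟩ : ∃ i, 1 ≤ f i := by
    obtain ⟨i, hi⟩ := lt_iSup_iff.1 (pos_iff_ne_zero.2 h0)
    exact ⟨i, Order.one_le_iff_pos.2 hi⟩
  obtain ⟨j0, hj0⟩ : ∃ j, 1 ≤ g j := by
    obtain ⟨j, hj⟩ := lt_iSup_iff.1 (pos_iff_ne_zero.2 h0')
    exact ⟨j, Order.one_le_iff_pos.2 hj⟩
  have hCtop : (∀ n : ℕ, (n : ℕ∞) ≤ C) → C = ⊤ := by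
    intro hn
    by_contra hC
    lift C to ℕ using hC
    exact absurd (hn (C + 1)) (by exact_mod_cast Nat.not_succ_le_self C)
  rcases eq_or_ne (⨆ i, f i) ⊤ with hat | hat
  · refine le_of_le_of_eq le_top (hCtop fun n => ?_).symm
    obtain ⟨i, hi⟩ := lt_iSup_iff.1 (show (n : ℕ∞) < ⨆ i, f i from hat ▸ ENat.coe_lt_top n)
    calc (n : ℕ∞) ≤ f i := hi.le
      _ = f i * 1 := (mul_one _).symm
      _ ≤ f i * g j0 := mul_le_mul_right hj0 _
      _ ≤ C := h i j0
  rcases eq_or_ne (⨆ j, g j) ⊤ with hbt | hbt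
  · refine le_of_le_of_eq le_top (hCtop fun n => ?_).symm
    obtain ⟨j, hj⟩ := lt_iSup_iff.1 (show (n : ℕ∞) < ⨆ j, g j from hbt ▸ ENat.coe_lt_top n)
    calc (n : ℕ∞) ≤ g j := hj.le
      _ = 1 * g j := (one_mul _).symm
      _ ≤ f i0 * g j := mul_le_mul_left hi0 _
      _ ≤ C := h i0 j
  obtain ⟨i, hi⟩ := my_exists_eq_iSup f h0 hat
  obtain ⟨j, hj⟩ := my_exists_eq_iSup g h0' hbt
  rw [← hi, ← hj]
  exact h i j

lemma Sn_le_self {X : Type*} [PseudoMetricSpace X] (f : X → X) (δ : ℝ) (x y : X) (n : ℕ) :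
    Sn f δ x y n ≤ n := by
  have h : {k : ℕ | k < n ∧ δ ≤ dist (f^[k] x) (f^[k] y)} ⊆ Set.Iio n := fun k hk => hk.1
  calc Sn f δ x y n ≤ (Set.Iio n).ncard := Set.ncard_le_ncard h (Set.finite_Iio n)
    _ = n := by rw [← Finset.coe_range, Set.ncard_coe_finset, Finset.card_range]

lemma sepFreq_mono {X Y : Type*} [PseudoMetricSpace X] [PseudoMetricSpace Y]
    (f : X → X) (g : Y → Y) (δ : ℝ) (x x' : X) (y y' : Y)
    (h : ∀ n, Sn f δ x x' n ≤ Sn g δ y y' n) : sepFreq f δ x x' ≤ sepFreq g δ y y' := by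
  apply Filter.limsup_le_limsup
  · refine Filter.Eventually.of_forall fun n => ?_
    rcases Nat.eq_zero_or_pos n with rfl | hn
    · simp
    · exact div_le_div_of_nonneg_right (by exact_mod_cast h n) (by positivity)
  · exact Filter.isCoboundedUnder_le_of_le Filter.atTop
      (fun n => div_nonneg (Nat.cast_nonneg _) (Nat.cast_nonneg _))
  · refine ⟨1, Filter.eventually_map.2 (Filter.Eventually.of_forall fun n => ?_)⟩
    rcases Nat.eq_zero_or_pos n with rfl | hn
    · simp
    · exact div_le_one_of_le₀ (by exact_mod_cast Sn_le_self g δ y y' n) (Nat.cast_nonneg _)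

lemma Sn_fst_le {X Y : Type*} [PseudoMetricSpace X] [PseudoMetricSpace Y]
    (f : X → X) (g : Y → Y) (δ : ℝ) (x x' : X) (y y' : Y) (n : ℕ) :
    Sn f δ x x' n ≤ Sn (Prod.map f g) δ (x, y) (x', y') n := by
  refine Set.ncard_le_ncard (fun k hk => ⟨hk.1, ?_⟩)
    ((Set.finite_Iio n).subset fun k hk => hk.1)
  rw [Prod.map_iterate, Prod.dist_eq]
  exact hk.2.trans (le_max_left _ _)

lemma Sn_snd_le {X Y : Type*} [PseudoMetricSpace X] [PseudoMetricSpace Y]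
    (f : X → X) (g : Y → Y) (δ : ℝ) (x x' : X) (y y' : Y) (n : ℕ) :
    Sn g δ y y' n ≤ Sn (Prod.map f g) δ (x, y) (x', y') n := by
  refine Set.ncard_le_ncard (fun k hk => ⟨hk.1, ?_⟩)
    ((Set.finite_Iio n).subset fun k hk => hk.1)
  rw [Prod.map_iterate, Prod.dist_eq]
  exact hk.2.trans (le_max_right _ _)

lemma isSeparatedSet_prod {X Y : Type*} [PseudoMetricSpace X] [PseudoMetricSpace Y]
    {f : X → X} {g : Y → Y} {δ ν : ℝ} {S : Set X} {T : Set Y}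
    (hS : IsSeparatedSet f δ ν S) (hT : IsSeparatedSet g δ ν T) :
    IsSeparatedSet (Prod.map f g) δ ν (S ×ˢ T) := by
  rintro ⟨x, y⟩ ⟨hx, hy⟩ ⟨x', y'⟩ ⟨hx', hy'⟩ hne
  rcases eq_or_ne x x' with rfl | hxx
  · have hyy : y ≠ y' := fun h => hne (by rw [h])
    exact (hT y hy y' hy' hyy).trans (sepFreq_mono g (Prod.map f g) δ y y' (x, y) (x, y')
      (fun n => Sn_snd_le f g δ x x y y' n))
  · exact (hS x hx x' hx' hxx).trans (sepFreq_mono f (Prod.map f g) δ x x' (x, y) (x', y')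
      (fun n => Sn_fst_le f g δ x x' y y' n))

/-- `Sep(f×g,δ,ν) ≥ Sep(f,δ,ν) · Sep(g,δ,ν)`, where `X × Y` carries the
maximum metric (the product metric in Mathlib). -/
theorem sepNum_prod_ge {X Y : Type*} [MetricSpace X] [MetricSpace Y]
    (f : X → X) (g : Y → Y) (δ ν : ℝ) (hδ : 0 < δ) (hν : ν ∈ Set.Ioc (0 : ℝ) 1) :
    SepNum f δ ν * SepNum g δ ν ≤ SepNum (Prod.map f g) δ ν := by
  rw [SepNum, SepNum, iSup_subtype', iSup_subtype']
  refine my_iSup_mul_iSup_le _ _ fun S T => ?_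
  rw [← my_encard_prod]
  exact le_iSup₂_of_le (S.1 ×ˢ T.1) (isSeparatedSet_prod S.2 T.2) le_rfl
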